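/- Let K be even and let D, m be positive integers with r := K/2 − D > 0 and r dividing D; set p = D/r (so K = 2(p+1)r). Consider the index coding problem with mK messages and antidotes A'_k = {k + iK : 1 ≤ i ≤ m−1} ∪ {k + jr + iK : 1 ≤ j ≤ p, 0 ≤ i ≤ m−1} ⊆ ZMod (mK) for each k ∈ ZMod (mK). Then the set C^(m) = { Σ_{t=0}^{p} e'_{i+(j+t)r} : 1 ≤ i ≤ r, 0 ≤ j ≤ p+1 }, where e'_l = Σ_{t=0}^{m−1} e_{l+tK} ∈ V_{mK}, is a valid scalar linear index code of length K − D for this problem, and moreover every valid scalar linear index code for this problem has length at least K − D. -/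

import Mathlib

/-- Standard basis vector `e_j` of `V_n = ZMod n → GF(2)`. -/
def stdVec (n : ℕ) (j : ZMod n) : ZMod n → ZMod 2 := fun i => if i = j then 1 else 0

/-- `C` is a valid scalar linear index code over `GF(2)` for the index coding problem
with `n` messages and antidote pattern `A`. -/
def IsIndexCode (n : ℕ) (A : ZMod n → Set (ZMod n)) (C : Set (ZMod n → ZMod 2)) : Prop :=
  C.Finite ∧ ∀ k : ZMod n,
    stdVec n k ∈ Submodule.span (ZMod 2) (C ∪ (stdVec n '' A k))

/-- `e'_l = Σ_{t=0}^{m-1} e_{l+tK} ∈ V_{mK}`. -/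
def eSum (K m : ℕ) (l : ℕ) : ZMod (m * K) → ZMod 2 :=
  ∑ t ∈ Finset.range m, stdVec (m * K) ((l + t * K : ℕ))

/-! ### Auxiliary lemmas -/

lemma IndexCoding.addself {n : ℕ} (a : ZMod n → ZMod 2) : a + a = 0 :=
  funext fun _ => CharTwo.add_self_eq_zero _

lemma IndexCoding.cancel_right {n : ℕ} (a b : ZMod n → ZMod 2) : a + b + b = a := by
  rw [add_assoc, IndexCoding.addself, add_zero]

lemma IndexCoding.rearr {n : ℕ} (x y z w : ZMod n → ZMod 2) (h : x + (y + z) = w) :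
    y = w + x + z := by
  have h2 : w + x + z = y + ((x + x) + (z + z)) := by rw [← h]; abel
  rw [h2, IndexCoding.addself, IndexCoding.addself, add_zero, add_zero]

lemma IndexCoding.sum_Ico_period {V : Type*} [AddCommMonoid V] (g : ℕ → V) (P : ℕ)
    (hg : ∀ x, g (x + P) = g x) (hP : 0 < P) :
    ∀ a, ∑ x ∈ Finset.Ico a (a+P), g x = ∑ x ∈ Finset.range P, g x := by
  intro a
  induction a with
  | zero => rw [Finset.range_eq_Ico]; simp
  | succ a ih =>
    rw [show a + 1 + P = (a + P) + 1 from by omega,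
      Finset.sum_Ico_succ_top (by omega : a + 1 ≤ a + P), hg a, ← ih,
      Finset.sum_eq_sum_Ico_succ_bot (by omega : a < a + P)]
    exact add_comm _ _

lemma IndexCoding.arith_key {r i i' j s' : ℕ} (hr : 0 < r) (hi1 : 1 ≤ i) (hi2 : i ≤ r)
    (hi1' : 1 ≤ i') (hi2' : i' ≤ r) (hteq : i + j*r = i' + s'*r) : i = i' ∧ j = s' := by
  rcases le_total j s' with hle | hle
  · obtain ⟨d, hd⟩ := Nat.exists_eq_add_of_le hle
    have h5 : i + j*r = (i' + d*r) + j*r := by rw [hteq, hd]; ring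
    have h6 : i = i' + d*r := Nat.add_right_cancel h5
    have hd0 : d = 0 := by
      by_contra hd0
      have : r ≤ d * r := Nat.le_mul_of_pos_left r (by omega)
      omega
    subst hd0
    simp only [Nat.zero_mul, Nat.add_zero] at h6 hd
    omega
  · obtain ⟨d, hd⟩ := Nat.exists_eq_add_of_le hle
    have h5 : (i + d*r) + s'*r = i' + s'*r := by rw [← hteq, hd]; ring
    have h6 : i + d*r = i' := Nat.add_right_cancel h5
    have hd0 : d = 0 := by
      by_contra hd0
      have : r ≤ d * r := Nat.le_mul_of_pos_left r (by omega)
      omega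
    subst hd0
    simp only [Nat.zero_mul, Nat.add_zero] at h6 hd
    omega

/-! ### Basic properties of `eSum` -/

lemma eSum_add_K (K m l : ℕ) : eSum K m (l + K) = eSum K m l := by
  unfold eSum
  have h : ∀ t : ℕ, stdVec (m*K) ((l + K + t * K : ℕ)) = stdVec (m*K) ((l + (t+1) * K : ℕ)) := by
    intro t; congr 1; push_cast; ring
  rw [Finset.sum_congr rfl (fun t _ => h t)]
  have hm0 : stdVec (m*K) ((l + m * K : ℕ)) = stdVec (m*K) ((l + 0 * K : ℕ)) := by
    congr 1; simp [Nat.cast_add, ZMod.natCast_self]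
  have h1 := Finset.sum_range_succ' (fun t => stdVec (m*K) ((l + t * K : ℕ))) m
  have h2 := Finset.sum_range_succ (fun t => stdVec (m*K) ((l + t * K : ℕ))) m
  have h3 : (∑ t ∈ Finset.range m, stdVec (m*K) ((l + (t+1) * K : ℕ))) + stdVec (m*K) ((l + 0*K : ℕ))
      = (∑ t ∈ Finset.range m, stdVec (m*K) ((l + t * K : ℕ))) + stdVec (m*K) ((l + 0*K : ℕ)) := by
    rw [← h1, h2, hm0]
  exact add_right_cancel h3

lemma eSum_mod (K m : ℕ) (hK : 0 < K) (l : ℕ) : eSum K m l = eSum K m (l % K) := by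
  induction l using Nat.strong_induction_on with
  | _ l ih =>
    rcases lt_or_ge l K with h | h
    · rw [Nat.mod_eq_of_lt h]
    · have h1 : l = (l - K) + K := by omega
      rw [h1, eSum_add_K, ih (l - K) (by omega), Nat.add_mod_right]

lemma eSum_congr {K : ℕ} (m : ℕ) (hK : 0 < K) {a b : ℕ} (h : a % K = b % K) :
    eSum K m a = eSum K m b := by
  rw [eSum_mod K m hK a, h, ← eSum_mod K m hK b]

lemma eSum_apply (K m : ℕ) (hK : 0 < K) (hm : 0 < m) (l : ℕ) (x : ZMod (m*K)) :
    eSum K m l x = if x.val % K = l % K then 1 else 0 := by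
  have hn : 0 < m * K := Nat.mul_pos hm hK
  haveI : NeZero (m*K) := ⟨hn.ne'⟩
  rw [eSum_mod K m hK l]
  set l' := l % K with hl'
  have hl'K : l' < K := Nat.mod_lt _ hK
  have key : eSum K m l' x = if x.val % K = l' then 1 else 0 := by
    unfold eSum
    rw [Finset.sum_apply]
    have hcond : ∀ t, t < m →
        (stdVec (m*K) ((l' + t * K : ℕ)) x = if x.val = l' + t * K then 1 else 0) := by
      intro t ht
      unfold stdVec
      have hlt : l' + t * K < m * K := by
        calc l' + t * K < K + t * K := by omega
        _ = (t+1) * K := by ring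
        _ ≤ m * K := Nat.mul_le_mul_right _ (by omega)
      have hiff : x = ((l' + t * K : ℕ) : ZMod (m*K)) ↔ x.val = l' + t * K := by
        constructor
        · intro h; rw [h, ZMod.val_cast_of_lt hlt]
        · intro h; rw [← h, ZMod.natCast_val, ZMod.cast_id]
      simp only [hiff]
    rw [Finset.sum_congr rfl (fun t ht => hcond t (Finset.mem_range.mp ht))]
    rcases eq_or_ne (x.val % K) l' with hx | hx
    · rw [if_pos hx]
      have hx0 : x.val < m * K := ZMod.val_lt x
      set t₀ := x.val / K with ht₀
      have ht₀m : t₀ < m := Nat.div_lt_of_lt_mul (by rw [Nat.mul_comm K m]; exact hx0)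
      have hxval : x.val = l' + t₀ * K := by
        conv_lhs => rw [← Nat.div_add_mod x.val K]
        rw [hx]; ring
      rw [Finset.sum_eq_single t₀]
      · rw [if_pos hxval]
      · intro t ht hne
        rw [if_neg]
        intro hc
        apply hne
        have : t * K = t₀ * K := by omega
        exact Nat.eq_of_mul_eq_mul_right hK this
      · intro h; exact absurd (Finset.mem_range.mpr ht₀m) h
    · rw [if_neg hx]
      apply Finset.sum_eq_zero
      intro t ht
      rw [if_neg]
      intro hc
      apply hx
      rw [hc, Nat.add_mul_mod_self_right, Nat.mod_eq_of_lt hl'K]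
  rw [key]

/-! ### The codewords -/

/-- The codeword `c_{i,j}`. -/
def cw (K m r p : ℕ) (i j : ℕ) : ZMod (m*K) → ZMod 2 :=
  ∑ t ∈ Finset.range (p+1), eSum K m (i + (j+t)*r)

/-- The code set. -/
def codeS (K m r p : ℕ) : Set (ZMod (m*K) → ZMod 2) :=
  {v | ∃ i j : ℕ, 1 ≤ i ∧ i ≤ r ∧ j ≤ p+1 ∧
    v = ∑ t ∈ Finset.range (p+1), eSum K m (i + (j+t)*r)}

/-- The antidote pattern. -/
def antiS (K m r p : ℕ) (k : ZMod (m*K)) : Set (ZMod (m*K)) :=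
  {x | ∃ i : ℕ, 1 ≤ i ∧ i ≤ m - 1 ∧ x = k + (i * K : ℕ)} ∪
    {x | ∃ j i : ℕ, 1 ≤ j ∧ j ≤ p ∧ i ≤ m - 1 ∧ x = k + (j * r + i * K : ℕ)}

open scoped Classical in
lemma codeS_eq (K m r p : ℕ) :
    codeS K m r p = ↑((Finset.Ico 1 (r+1) ×ˢ Finset.range (p+2)).image
      (fun ij => cw K m r p ij.1 ij.2)) := by
  ext v
  simp only [codeS, Set.mem_setOf_eq, Finset.coe_image, Set.mem_image, Finset.mem_coe,
    Finset.mem_product, Finset.mem_Ico, Finset.mem_range]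
  constructor
  · rintro ⟨i, j, h1, h2, h3, h4⟩
    exact ⟨(i, j), ⟨⟨h1, by omega⟩, by omega⟩, h4.symm⟩
  · rintro ⟨⟨i, j⟩, ⟨⟨h1, h2⟩, h3⟩, h4⟩
    exact ⟨i, j, h1, by omega, by omega, h4.symm⟩

lemma cw_self_eval {K m r p : ℕ} (hK : 0 < K) (hm : 0 < m) (hr : 0 < r) (hp : 1 ≤ p)
    (hKrp : K = (2*p+2)*r) {i j : ℕ} (hi1 : 1 ≤ i) (hi2 : i ≤ r) (hj : j ≤ p+1) :
    cw K m r p i j (((i + j*r : ℕ) : ZMod (m*K))) = 1 := by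
  have hKm : K ≤ m * K := Nat.le_mul_of_pos_left K hm
  have hlt : i + j*r < K := by
    have h1 : i + j*r ≤ r + (p+1)*r := by
      have := Nat.mul_le_mul_right r hj; omega
    have h2 : r + (p+1)*r < (2*p+2)*r := by
      have h4 : (p+2)*r < (2*p+2)*r := (Nat.mul_lt_mul_right hr).mpr (by omega)
      have h3 : r + (p+1)*r = (p+2)*r := by ring
      omega
    omega
  have hval : (((i + j*r : ℕ) : ZMod (m*K))).val = i + j*r :=
    ZMod.val_cast_of_lt (by omega)
  unfold cw
  rw [Finset.sum_apply]
  have hterm : ∀ t, (eSum K m (i + (j+t)*r)) (((i + j*r : ℕ) : ZMod (m*K)))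
      = if i + j*r = (i + (j+t)*r) % K then 1 else 0 := by
    intro t
    rw [eSum_apply K m hK hm, hval, Nat.mod_eq_of_lt hlt]
  rw [Finset.sum_congr rfl (fun t _ => hterm t)]
  rw [Finset.sum_eq_single 0]
  · rw [if_pos]; rw [Nat.add_zero, Nat.mod_eq_of_lt hlt]
  · intro t ht ht0
    rw [if_neg]
    have hub : i + (j+t)*r ≤ K := by
      have h1 : j + t ≤ 2*p+1 := by
        have := Finset.mem_range.mp ht; omega
      have h2 : (j+t)*r ≤ (2*p+1)*r := Nat.mul_le_mul_right r h1
      have h3 : i + (2*p+1)*r ≤ (2*p+2)*r := by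
        have : (2*p+1)*r + r = (2*p+2)*r := by ring
        omega
      omega
    rcases eq_or_lt_of_le hub with he | hlt2
    · rw [he, Nat.mod_self]; omega
    · rw [Nat.mod_eq_of_lt hlt2]
      have h5 : j*r + r ≤ (j+t)*r := by
        have h6 : (j+1)*r ≤ (j+t)*r := Nat.mul_le_mul_right r (by omega)
        have h4 : (j+1)*r = j*r + r := by ring
        omega
      omega
  · intro h; exact absurd (Finset.mem_range.mpr (by omega)) h

lemma cw_eval_one {K m r p : ℕ} (hK : 0 < K) (hm : 0 < m) (hr : 0 < r) (hp : 1 ≤ p)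
    (hKrp : K = (2*p+2)*r) {i j i' j' : ℕ} (hi1 : 1 ≤ i) (hi2 : i ≤ r) (hj : j ≤ p+1)
    (hi1' : 1 ≤ i') (hi2' : i' ≤ r) (hj' : j' ≤ p+1)
    (h : cw K m r p i' j' (((i + j*r : ℕ) : ZMod (m*K))) = 1) :
    i = i' ∧ j' ≤ j := by
  have hKm : K ≤ m * K := Nat.le_mul_of_pos_left K hm
  have hlt : i + j*r < K := by
    have h1 : i + j*r ≤ r + (p+1)*r := by
      have := Nat.mul_le_mul_right r hj; omega
    have h2 : r + (p+1)*r < (2*p+2)*r := by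
      have h4 : (p+2)*r < (2*p+2)*r := (Nat.mul_lt_mul_right hr).mpr (by omega)
      have h3 : r + (p+1)*r = (p+2)*r := by ring
      omega
    omega
  have hval : (((i + j*r : ℕ) : ZMod (m*K))).val = i + j*r :=
    ZMod.val_cast_of_lt (by omega)
  unfold cw at h
  rw [Finset.sum_apply] at h
  have hterm : ∀ t, (eSum K m (i' + (j'+t)*r)) (((i + j*r : ℕ) : ZMod (m*K)))
      = if i + j*r = (i' + (j'+t)*r) % K then 1 else 0 := by
    intro t
    rw [eSum_apply K m hK hm, hval, Nat.mod_eq_of_lt hlt]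
  rw [Finset.sum_congr rfl (fun t _ => hterm t)] at h
  have hex : ∃ t ∈ Finset.range (p+1), i + j*r = (i' + (j'+t)*r) % K := by
    by_contra hc
    push_neg at hc
    rw [Finset.sum_eq_zero (fun t ht => if_neg (hc t ht))] at h
    exact absurd h (by decide)
  obtain ⟨t, ht, hteq⟩ := hex
  have htp : t ≤ p := by have := Finset.mem_range.mp ht; omega
  set s' := j' + t with hs'
  have hs'2 : s' ≤ 2*p+1 := by omega
  have hub : i' + s'*r ≤ K := by
    have h2 : s'*r ≤ (2*p+1)*r := Nat.mul_le_mul_right r hs'2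
    have h3 : i' + (2*p+1)*r ≤ (2*p+2)*r := by
      have : (2*p+1)*r + r = (2*p+2)*r := by ring
      omega
    omega
  rcases eq_or_lt_of_le hub with he | hlt2
  · rw [he, Nat.mod_self] at hteq; omega
  · rw [Nat.mod_eq_of_lt hlt2] at hteq
    have key : i = i' ∧ j = s' := IndexCoding.arith_key hr hi1 hi2 hi1' hi2' hteq
    omega

lemma cw_inj {K m r p : ℕ} (hK : 0 < K) (hm : 0 < m) (hr : 0 < r) (hp : 1 ≤ p)
    (hKrp : K = (2*p+2)*r) {i j i' j' : ℕ} (hi1 : 1 ≤ i) (hi2 : i ≤ r) (hj : j ≤ p+1)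
    (hi1' : 1 ≤ i') (hi2' : i' ≤ r) (hj' : j' ≤ p+1)
    (h : cw K m r p i j = cw K m r p i' j') : i = i' ∧ j = j' := by
  have h1 := cw_eval_one hK hm hr hp hKrp hi1 hi2 hj hi1' hi2' hj'
    (by rw [← h]; exact cw_self_eval hK hm hr hp hKrp hi1 hi2 hj)
  have h2 := cw_eval_one hK hm hr hp hKrp hi1' hi2' hj' hi1 hi2 hj
    (by rw [h]; exact cw_self_eval hK hm hr hp hKrp hi1' hi2' hj')
  omega

open scoped Classical in
lemma codeS_ncard {K m r p : ℕ} (hK : 0 < K) (hm : 0 < m) (hr : 0 < r) (hp : 1 ≤ p)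
    (hKrp : K = (2*p+2)*r) : (codeS K m r p).ncard = (p+2)*r := by
  rw [codeS_eq, Set.ncard_coe_finset, Finset.card_image_of_injOn ?inj,
    Finset.card_product, Nat.card_Ico, Finset.card_range]
  · rw [Nat.add_sub_cancel]; ring
  case inj =>
    rintro ⟨i, j⟩ ha ⟨i', j'⟩ hb hfe
    simp only [Finset.coe_product, Set.mem_prod, Finset.mem_coe, Finset.mem_Ico,
      Finset.mem_range] at ha hb
    have := cw_inj hK hm hr hp hKrp ha.1.1 (by omega) (by omega)
      hb.1.1 (by omega) (by omega) hfe
    exact Prod.ext this.1 this.2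

/-! ### Validity of the code -/

lemma codeS_valid (K m r p : ℕ) (hK : 0 < K) (hm : 0 < m) (hr : 0 < r) (hp : 1 ≤ p)
    (hKrp : K = (2*p+2)*r) :
    IsIndexCode (m*K) (antiS K m r p) (codeS K m r p) := by
  constructor
  · rw [codeS_eq]; exact Finset.finite_toSet _
  · intro k
    haveI : NeZero (m*K) := ⟨(Nat.mul_pos hm hK).ne'⟩
    set Sp := Submodule.span (ZMod 2) (codeS K m r p ∪ stdVec (m*K) '' antiS K m r p k)
      with hSpdef
    set v := k.val with hvdef
    have hvk : ((v : ℕ) : ZMod (m*K)) = k := by rw [hvdef, ZMod.natCast_val, ZMod.cast_id]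
    set a := v % K with hadef
    have haK : a < K := Nat.mod_lt _ hK
    set b := (a + K - 1) % K + 1 with hbdef
    have hbK : b ≤ K := by
      have := Nat.mod_lt (a + K - 1) hK; omega
    have hb1 : 1 ≤ b := by omega
    have hab : b % K = a := by
      rcases Nat.eq_zero_or_pos a with h0 | h0
      · have hbb : b = K := by
          rw [hbdef, h0, Nat.zero_add, Nat.mod_eq_of_lt (by omega)]
          omega
        rw [hbb, Nat.mod_self, h0]
      · have hbb : b = a := by
          rw [hbdef, show a + K - 1 = (a - 1) + K from by omega,
            Nat.add_mod_right, Nat.mod_eq_of_lt (by omega)]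
          omega
        rw [hbb, Nat.mod_eq_of_lt haK]
    have hmd : (b-1) % r + (b-1)/r * r = b - 1 := Nat.mod_add_div' _ _
    have hmlt : (b-1) % r < r := Nat.mod_lt _ hr
    set c := (b-1) % r with hcdef
    set s := (b-1) / r with hsdef
    set i := c + 1 with hidef
    have hbis : b = i + s * r := by rw [hidef]; omega
    have hi1 : 1 ≤ i := by omega
    have hi2 : i ≤ r := by omega
    have hs2 : s < 2*p+2 := by
      have hlt : b - 1 < (2*p+2) * r := by omega
      exact (Nat.div_lt_iff_lt_mul hr).mpr hlt
    have hvb : v % K = b % K := hab.symm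
    have E2 : ∀ t : ℕ, eSum K m (v + t*r) = eSum K m (i + (s+t)*r) := by
      intro t
      apply eSum_congr m hK
      rw [show i + (s+t)*r = b + t*r from by rw [hbis]; ring]
      exact Nat.ModEq.add_right _ hvb
    have E3 : stdVec (m*K) k
        = eSum K m v + ∑ t ∈ Finset.Ico 1 m, stdVec (m*K) ((v + t*K : ℕ)) := by
      have h0 : eSum K m v = stdVec (m*K) ((v + 0*K : ℕ))
          + ∑ t ∈ Finset.Ico 1 m, stdVec (m*K) ((v + t*K : ℕ)) := by
        unfold eSum
        rw [Finset.range_eq_Ico, Finset.sum_eq_sum_Ico_succ_bot hm]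
      have h1 : stdVec (m*K) ((v + 0*K : ℕ)) = stdVec (m*K) k := by
        rw [show v + 0*K = v from by ring, hvk]
      rw [h0, h1]
      exact (IndexCoding.cancel_right _ _).symm
    have mem1 : ∀ t ∈ Finset.Ico 1 m, stdVec (m*K) ((v + t*K : ℕ)) ∈ Sp := by
      intro t ht
      rw [Finset.mem_Ico] at ht
      apply Submodule.subset_span
      apply Set.mem_union_right
      refine ⟨k + ((t*K : ℕ) : ZMod (m*K)), Or.inl ⟨t, ht.1, by omega, rfl⟩, ?_⟩
      congr 1
      rw [← hvk]; push_cast; ring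
    have mem2 : ∀ t, 1 ≤ t → t ≤ p → eSum K m (v + t*r) ∈ Sp := by
      intro t ht1 ht2
      unfold eSum
      apply Submodule.sum_mem
      intro i' hi'
      rw [Finset.mem_range] at hi'
      apply Submodule.subset_span
      apply Set.mem_union_right
      refine ⟨k + ((t*r + i'*K : ℕ) : ZMod (m*K)), Or.inr ⟨t, i', ht1, ht2, by omega, rfl⟩, ?_⟩
      congr 1
      rw [← hvk]; push_cast; ring
    have memcw : ∀ j', j' ≤ p + 1 → cw K m r p i j' ∈ Sp := by
      intro j' hj'
      apply Submodule.subset_span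
      apply Set.mem_union_left
      exact ⟨i, j', hi1, hi2, hj', rfl⟩
    rcases le_or_gt s (p+1) with hsle | hsgt
    · have hfs : cw K m r p i s
          = eSum K m v + ∑ t ∈ Finset.Ico 1 (p+1), eSum K m (v + t*r) := by
        unfold cw
        rw [Finset.sum_congr rfl (fun t _ => (E2 t).symm),
          Finset.range_eq_Ico, Finset.sum_eq_sum_Ico_succ_bot (by omega : 0 < p+1)]
        congr 1
        rw [show v + 0*r = v from by ring]
      have hes : eSum K m v
          = cw K m r p i s + ∑ t ∈ Finset.Ico 1 (p+1), eSum K m (v + t*r) := by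
        rw [hfs]; exact (IndexCoding.cancel_right _ _).symm
      rw [E3, hes]
      refine Submodule.add_mem _ (Submodule.add_mem _ (memcw s hsle)
        (Submodule.sum_mem _ (fun t ht => ?_))) (Submodule.sum_mem _ mem1)
      rw [Finset.mem_Ico] at ht
      exact mem2 t ht.1 (by omega)
    · set u := s - (p+1) with hudef
      have hu1 : 1 ≤ u := by omega
      have hup : u ≤ p := by omega
      set g : ℕ → (ZMod (m*K) → ZMod 2) := fun s' => eSum K m (i + s'*r) with hgdef
      have hgper : ∀ x, g (x + (2*p+2)) = g x := by
        intro x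
        apply eSum_congr m hK
        rw [show i + (x + (2*p+2))*r = (i + x*r) + K from by rw [hKrp]; ring]
        exact Nat.add_mod_right _ _
      have hA : cw K m r p i 0 + cw K m r p i (p+1)
          = ∑ s' ∈ Finset.range (2*p+2), g s' := by
        unfold cw
        have h1 : ∑ t ∈ Finset.range (p+1), eSum K m (i + (0+t)*r)
            = ∑ s' ∈ Finset.Ico 0 (p+1), g s' := by
          rw [Finset.range_eq_Ico]
          exact Finset.sum_congr rfl (fun t _ => by rw [Nat.zero_add])
        have h2 : ∑ t ∈ Finset.range (p+1), eSum K m (i + ((p+1)+t)*r)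
            = ∑ s' ∈ Finset.Ico (p+1) (2*p+2), g s' := by
          rw [Finset.sum_Ico_eq_sum_range, show 2*p+2 - (p+1) = p+1 from by omega]
        rw [h1, h2, Finset.range_eq_Ico,
          Finset.sum_Ico_consecutive _ (by omega : 0 ≤ p+1) (by omega : p+1 ≤ 2*p+2)]
      have hB : cw K m r p i u + ∑ t ∈ Finset.range (p+1), eSum K m (v + t*r)
          = ∑ s' ∈ Finset.range (2*p+2), g s' := by
        have h1 : cw K m r p i u = ∑ s' ∈ Finset.Ico u (u+(p+1)), g s' := by
          rw [Finset.sum_Ico_eq_sum_range, show u+(p+1) - u = p+1 from by omega]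
          rfl
        have h2 : ∑ t ∈ Finset.range (p+1), eSum K m (v + t*r)
            = ∑ s' ∈ Finset.Ico s (s+(p+1)), g s' := by
          rw [Finset.sum_Ico_eq_sum_range, show s+(p+1) - s = p+1 from by omega]
          exact Finset.sum_congr rfl (fun t _ => E2 t)
        rw [h1, h2, show u + (p+1) = s from by omega,
          Finset.sum_Ico_consecutive _ (by omega : u ≤ s) (by omega : s ≤ s+(p+1)),
          show s + (p+1) = u + (2*p+2) from by omega]
        exact IndexCoding.sum_Ico_period g (2*p+2) hgper (by omega) u
      have hsum1 : ∑ t ∈ Finset.range (p+1), eSum K m (v + t*r)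
          = eSum K m v + ∑ t ∈ Finset.Ico 1 (p+1), eSum K m (v + t*r) := by
        rw [Finset.range_eq_Ico, Finset.sum_eq_sum_Ico_succ_bot (by omega : 0 < p+1)]
        congr 1
        rw [show v + 0*r = v from by ring]
      have hcomb : cw K m r p i u
          + (eSum K m v + ∑ t ∈ Finset.Ico 1 (p+1), eSum K m (v + t*r))
          = cw K m r p i 0 + cw K m r p i (p+1) := by
        rw [← hsum1, hB, ← hA]
      have hes := IndexCoding.rearr _ _ _ _ hcomb
      rw [E3, hes]
      refine Submodule.add_mem _ (Submodule.add_mem _ (Submodule.add_mem _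
        (Submodule.add_mem _ (memcw 0 (by omega)) (memcw (p+1) (by omega)))
        (memcw u (by omega)))
        (Submodule.sum_mem _ (fun t ht => ?_))) (Submodule.sum_mem _ mem1)
      rw [Finset.mem_Ico] at ht
      exact mem2 t ht.1 (by omega)

/-! ### The lower bound -/

lemma code_lower_bound (K m r p : ℕ) (hK : 0 < K) (hm : 0 < m) (hr : 0 < r) (hp : 1 ≤ p)
    (hKrp : K = (2*p+2)*r) (C' : Set (ZMod (m*K) → ZMod 2))
    (hC' : IsIndexCode (m*K) (antiS K m r p) C') : (p+2)*r ≤ C'.ncard := by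
  classical
  set N := (p+2)*r with hNdef
  have hNK : N < K := by
    rw [hKrp, hNdef]
    exact (Nat.mul_lt_mul_right hr).mpr (by omega)
  have hKn : K ≤ m*K := Nat.le_mul_of_pos_left K hm
  have hNn : N < m*K := by omega
  haveI : NeZero (m*K) := ⟨(Nat.mul_pos hm hK).ne'⟩
  set π : (ZMod (m*K) → ZMod 2) →ₗ[ZMod 2] (Fin N → ZMod 2) :=
    LinearMap.funLeft (ZMod 2) (ZMod 2) (fun s => ((s : ℕ) : ZMod (m*K))) with hπdef
  set P := Submodule.span (ZMod 2) (π '' C') with hPdef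
  have hπstd : ∀ w : ℕ, w < m*K →
      π (stdVec (m*K) ((w:ℕ) : ZMod (m*K))) = fun s : Fin N => if (s:ℕ) = w then 1 else 0 := by
    intro w hw
    funext s
    show (if (((s:ℕ):ℕ) : ZMod (m*K)) = ((w:ℕ) : ZMod (m*K)) then (1:ZMod 2) else 0) = _
    rcases eq_or_ne ((s:ℕ)) w with h | h
    · rw [if_pos (by rw [h]), if_pos h]
    · rw [if_neg, if_neg h]
      intro hc
      apply h
      have := congrArg ZMod.val hc
      rwa [ZMod.val_cast_of_lt (by omega : (s:ℕ) < m*K),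
        ZMod.val_cast_of_lt hw] at this
  have hmK1 : (m-1)*K + K = m*K := by
    calc (m-1)*K + K = ((m-1)+1)*K := by ring
    _ = m*K := by rw [show m-1+1 = m from by omega]
  have main : ∀ c, ∀ w : ℕ, w < N → N - w ≤ c →
      π (stdVec (m*K) ((w:ℕ):ZMod (m*K))) ∈ P := by
    intro c
    induction c with
    | zero => intro w hw hc; omega
    | succ c ih =>
      intro w hw _
      have hspan := hC'.2 ((w:ℕ) : ZMod (m*K))
      have hmap := Submodule.apply_mem_span_image_of_mem_span π hspan
      refine Submodule.span_le.mpr ?_ hmap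
      rw [Set.image_union]
      rintro y (hy | hy)
      · exact Submodule.subset_span hy
      · obtain ⟨z, hz, rfl⟩ := hy
        obtain ⟨x, hx, rfl⟩ := hz
        rcases hx with ⟨i, hi1, hi2, rfl⟩ | ⟨j, i, hj1, hj2, hi, rfl⟩
        · have h1 : i*K ≤ (m-1)*K := Nat.mul_le_mul_right K hi2
          have hiK : K ≤ i*K := Nat.le_mul_of_pos_left K (by omega)
          have hb : w + i*K < m*K := by omega
          have hx2 : ((w:ℕ) : ZMod (m*K)) + ((i*K:ℕ) : ZMod (m*K))
              = ((w + i*K : ℕ) : ZMod (m*K)) := by push_cast; ring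
          rw [hx2, hπstd _ hb]
          have hzero : (fun s : Fin N => if (s:ℕ) = w + i*K then (1:ZMod 2) else 0) = 0 := by
            funext s
            rw [if_neg]
            · rfl
            · have := s.isLt; omega
          rw [hzero]
          exact Submodule.zero_mem P
        · have h1 : j*r ≤ p*r := Nat.mul_le_mul_right r hj2
          have h2 : i*K ≤ (m-1)*K := Nat.mul_le_mul_right K hi
          have h3 : N + p*r ≤ K := by
            have h4 : (p+2)*r + p*r = (2*p+2)*r := by ring
            omega
          have hjr : r ≤ j*r := Nat.le_mul_of_pos_left r (by omega)
          set w₂ := w + (j*r + i*K) with hw2def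
          have hb : w₂ < m*K := by omega
          have hx2 : ((w:ℕ) : ZMod (m*K)) + ((j*r + i*K :ℕ) : ZMod (m*K))
              = ((w₂ : ℕ) : ZMod (m*K)) := by rw [hw2def]; push_cast; ring
          rw [hx2]
          rcases lt_or_ge w₂ N with hlt | hge
          · exact ih w₂ hlt (by omega)
          · rw [hπstd _ hb]
            have hzero : (fun s : Fin N => if (s:ℕ) = w₂ then (1:ZMod 2) else 0) = 0 := by
              funext s
              rw [if_neg]
              · rfl
              · have := s.isLt; omega
            rw [hzero]
            exact Submodule.zero_mem P
  have hmem : ∀ s : Fin N, π (stdVec (m*K) (((s:ℕ):ℕ):ZMod (m*K))) ∈ P :=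
    fun s => main N (s:ℕ) s.isLt (by omega)
  have hli : LinearIndependent (ZMod 2)
      (fun s : Fin N => π (stdVec (m*K) (((s:ℕ):ℕ):ZMod (m*K)))) := by
    have heq : (fun s : Fin N => π (stdVec (m*K) (((s:ℕ):ℕ):ZMod (m*K))))
        = fun s => Pi.single (M := fun _ : Fin N => ZMod 2) s 1 := by
      funext s
      rw [hπstd _ (by have := s.isLt; omega)]
      funext s'
      rw [Pi.single_apply]
      rcases eq_or_ne s' s with h | h
      · subst h; rw [if_pos rfl, if_pos rfl]
      · rw [if_neg (fun hc => h (Fin.ext hc)), if_neg h]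
    rw [heq]
    apply Fintype.linearIndependent_iff.mpr
    intro gc hsum s
    have := congrFun hsum s
    simpa [Pi.single_apply, Finset.sum_apply, Finset.sum_ite_eq] using this
  have hliP : LinearIndependent (ZMod 2)
      (fun s : Fin N => (⟨_, hmem s⟩ : P)) := by
    apply LinearIndependent.of_comp P.subtype
    exact hli
  have hcard : N ≤ Module.finrank (ZMod 2) P := by
    have := hliP.fintype_card_le_finrank
    simpa using this
  have hfin := hC'.1
  have himg : π '' C' = ↑((hfin.toFinset).image π) := by
    rw [Finset.coe_image, Set.Finite.coe_toFinset]
  have h2 : Module.finrank (ZMod 2) P ≤ ((hfin.toFinset).image π).card := by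
    rw [hPdef, himg]
    exact finrank_span_finset_le_card _
  have h3 : ((hfin.toFinset).image π).card ≤ hfin.toFinset.card := Finset.card_image_le
  have h4 : hfin.toFinset.card = C'.ncard := (Set.ncard_eq_toFinset_card C' hfin).symm
  omega

/-- **Class (i) lifted (Corollary 4).** For `K` even, `r = K/2 - D > 0` and `r ∣ D`
with `p = D/r`, the lifted code `{Σ_{t=0}^{p} e'_{i+(j+t)r} : 1 ≤ i ≤ r, 0 ≤ j ≤ p+1}`
is a valid scalar linear index code of optimal length `K - D` for the lifted problem on
`m*K` messages with antidotes `{k+iK : 1 ≤ i ≤ m-1} ∪ {k+jr+iK : 1 ≤ j ≤ p, 0 ≤ i ≤ m-1}`. -/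
theorem lifted_code_class_i (K D m : ℕ) (hK : 0 < K) (hD : 0 < D) (hm : 0 < m)
    (hKeven : 2 ∣ K) (hr : 0 < K / 2 - D) (hrD : (K / 2 - D) ∣ D) :
    (IsIndexCode (m * K)
        (fun k => {x | ∃ i : ℕ, 1 ≤ i ∧ i ≤ m - 1 ∧ x = k + (i * K : ℕ)} ∪
          {x | ∃ j i : ℕ, 1 ≤ j ∧ j ≤ D / (K / 2 - D) ∧ i ≤ m - 1 ∧
            x = k + (j * (K / 2 - D) + i * K : ℕ)})
        {v | ∃ i j : ℕ, 1 ≤ i ∧ i ≤ K / 2 - D ∧ j ≤ D / (K / 2 - D) + 1 ∧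
          v = ∑ t ∈ Finset.range (D / (K / 2 - D) + 1),
            eSum K m (i + (j + t) * (K / 2 - D))} ∧
      ({v | ∃ i j : ℕ, 1 ≤ i ∧ i ≤ K / 2 - D ∧ j ≤ D / (K / 2 - D) + 1 ∧
          v = ∑ t ∈ Finset.range (D / (K / 2 - D) + 1),
            eSum K m (i + (j + t) * (K / 2 - D))} :
        Set (ZMod (m * K) → ZMod 2)).ncard = K - D) ∧
    (∀ C' : Set (ZMod (m * K) → ZMod 2),
      IsIndexCode (m * K)
        (fun k => {x | ∃ i : ℕ, 1 ≤ i ∧ i ≤ m - 1 ∧ x = k + (i * K : ℕ)} ∪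
          {x | ∃ j i : ℕ, 1 ≤ j ∧ j ≤ D / (K / 2 - D) ∧ i ≤ m - 1 ∧
            x = k + (j * (K / 2 - D) + i * K : ℕ)}) C' →
        K - D ≤ C'.ncard) := by
  have hr' : 0 < K / 2 - D := hr
  set r := K / 2 - D with hrdef
  set p := D / r with hpdef
  have hDpr : D = p * r := (Nat.div_mul_cancel hrD).symm
  have hp1 : 1 ≤ p := by
    rcases Nat.eq_zero_or_pos p with h0 | h0
    · rw [h0, Nat.zero_mul] at hDpr; omega
    · exact h0
  have hK2 : 2 * (K/2) = K := Nat.mul_div_cancel' hKeven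
  have hKrp : K = (2*p+2)*r := by
    have h5 : K = 2*(D + r) := by omega
    rw [h5, hDpr]; ring
  have hKD : K - D = (p+2)*r := by
    have h6 : K = D + (p+2)*r := by rw [hKrp, hDpr]; ring
    omega
  refine ⟨⟨?_, ?_⟩, ?_⟩
  · exact codeS_valid K m r p hK hm hr' hp1 hKrp
  · show (codeS K m r p).ncard = K - D
    rw [codeS_ncard hK hm hr' hp1 hKrp, hKD]
  · intro C' hC'
    rw [hKD]
    exact code_lower_bound K m r p hK hm hr' hp1 hKrp C' hC'
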